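/- Let G = (V, E) be a finite simple undirected graph with non-negative edge weights w : E → ℕ that admits a minimum-weight perfect matching M, let r ≥ w(M) be an integer, and define new edge weights w' : E → ℤ by w'(e) = −w(e) − r − 1 for e ∈ M and w'(e) = w(e) + r + 1 for e ∉ M. Then w' is conservative, i.e. every cycle of G has non-negative total w'-weight. -/

import Mathlib

variable {V : Type} [Fintype V] [DecidableEq V]

/-- A perfect matching of a graph `G`, viewed as a finite set of edges:
every edge belongs to `G` and every vertex lies in exactly one edge of `M`. -/
def IsPM (G : SimpleGraph V) (M : Finset (Sym2 V)) : Prop :=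
  (∀ e ∈ M, e ∈ G.edgeSet) ∧ ∀ v : V, ∃! e, e ∈ M ∧ v ∈ e

/-- The total weight of a set of edges. -/
def wt (w : Sym2 V → ℤ) (X : Finset (Sym2 V)) : ℤ := ∑ e ∈ X, w e

/-- The total weight of (the edge set of) a closed walk. -/
def cycWt {G : SimpleGraph V} (w : Sym2 V → ℤ) {v : V} (c : G.Walk v v) : ℤ :=
  (c.edges.map w).sum

/-- A cycle `c` is `M`-alternating: its edges alternate (cyclically) between edges in `M`
and edges not in `M`; equivalently, every vertex of the cycle lies in exactly one edge of
the cycle that belongs to `M`. -/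
def IsAltCycle (G : SimpleGraph V) (M : Finset (Sym2 V)) {v : V} (c : G.Walk v v) : Prop :=
  c.IsCycle ∧ ∀ u ∈ c.support, ∃! e, e ∈ c.edges ∧ u ∈ e ∧ e ∈ M

/- ------------------ auxiliary lemmas ------------------ -/

lemma mem_support_of_mem_edges' {G : SimpleGraph V} {v w u : V} {e : Sym2 V}
    (p : G.Walk v w) (he : e ∈ p.edges) (hu : u ∈ e) : u ∈ p.support := by
  induction e using Sym2.ind with
  | _ a b =>
    rcases Sym2.mem_iff.mp hu with rfl | rfl
    · exact p.fst_mem_support_of_mem_edges he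
    · exact p.snd_mem_support_of_mem_edges he

lemma path_filter_end {G : SimpleGraph V} {x u : V}
    (p : G.Walk x u) (hp : p.IsPath) (hn : ¬ p.Nil) :
    (p.edges.filter (fun e => u ∈ e)).length = 1 := by
  induction p with
  | nil => simp at hn
  | @cons a b u h q ih =>
    have hq : q.IsPath := hp.of_cons
    by_cases hbu : b = u
    · subst hbu
      have hqnil : q = SimpleGraph.Walk.nil := (SimpleGraph.Walk.isPath_iff_eq_nil (p := q)).mp hq
      subst hqnil
      simp
    · have hau : a ≠ u := by
        intro hau
        subst hau
        have := SimpleGraph.Walk.isPath_iff_eq_nil.mp hp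
        simp at this
      have hqn : ¬ q.Nil := SimpleGraph.Walk.not_nil_of_ne hbu
      have hhead : ¬ (u ∈ s(a, b)) := by
        rw [Sym2.mem_iff]
        rintro (rfl | rfl)
        · exact hau rfl
        · exact hbu rfl
      rw [SimpleGraph.Walk.edges_cons, List.filter_cons_of_neg (by simpa using hhead)]
      exact ih hq hqn

lemma cycle_filter_two_start {G : SimpleGraph V} {u : V} (c : G.Walk u u) (hc : c.IsCycle) :
    (c.edges.filter (fun e => u ∈ e)).length = 2 := by
  cases c with
  | nil => exact absurd hc SimpleGraph.Walk.IsCycle.not_of_nil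
  | @cons _ b _ h q =>
    rw [SimpleGraph.Walk.cons_isCycle_iff] at hc
    have hqn : ¬ q.Nil := SimpleGraph.Walk.not_nil_of_ne (G.ne_of_adj h).symm
    have h1 := path_filter_end q hc.1 hqn
    rw [SimpleGraph.Walk.edges_cons, List.filter_cons_of_pos (by simp)]
    simp [h1]

lemma cycle_filter_two {G : SimpleGraph V} {v : V} (c : G.Walk v v) (hc : c.IsCycle)
    {u : V} (hu : u ∈ c.support) :
    (c.edges.filter (fun e => u ∈ e)).length = 2 := by
  have hperm : ((c.rotate u hu).edges.filter (fun e => u ∈ e)).length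
      = (c.edges.filter (fun e => u ∈ e)).length :=
    ((c.rotate_edges u hu).perm.filter _).length_eq
  rw [← hperm]
  exact cycle_filter_two_start (c.rotate u hu) (hc.rotate hu)

lemma end_mem_support_tail {G : SimpleGraph V} {v : V} (c : G.Walk v v) (hn : ¬ c.Nil) :
    v ∈ c.support.tail := by
  cases c with
  | nil => simp at hn
  | cons h q => simpa using q.end_mem_support

lemma filter_toFinset_card {α : Type*} [DecidableEq α] (l : List α) (hl : l.Nodup)
    (P : α → Prop) [DecidablePred P] :
    (l.toFinset.filter P).card = (l.filter (fun a => P a)).length := by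
  rw [← List.toFinset_card_of_nodup (hl.filter _)]
  congr 1
  ext a
  simp [List.mem_filter, Finset.mem_filter]

/-- **Lemma (the modified weights are conservative).** Let `M` be a minimum-weight perfect
matching of `G` with non-negative weights `w : E → ℕ`, let `r ≥ w(M)` be an integer, and
define `w'(e) = -w(e) - r - 1` for `e ∈ M` and `w'(e) = w(e) + r + 1` for `e ∉ M`. Then
`w'` is conservative: every cycle of `G` has non-negative total `w'`-weight. -/
theorem modified_weights_conservative (G : SimpleGraph V) (w : Sym2 V → ℕ)
    (M : Finset (Sym2 V)) (hM : IsPM G M)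
    (hmin : ∀ M' : Finset (Sym2 V), IsPM G M' →
      wt (fun e => (w e : ℤ)) M ≤ wt (fun e => (w e : ℤ)) M')
    (r : ℤ) (hr : wt (fun e => (w e : ℤ)) M ≤ r)
    (w' : Sym2 V → ℤ)
    (hw' : ∀ e : Sym2 V,
      w' e = if e ∈ M then -(w e : ℤ) - r - 1 else (w e : ℤ) + r + 1) :
    ∀ (v : V) (c : G.Walk v v), c.IsCycle → 0 ≤ cycWt w' c := by
  classical
  intro v c hc
  set A : Finset (Sym2 V) := c.edges.toFinset with hA
  have hnd : c.edges.Nodup := hc.edges_nodup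
  set L : ℕ := c.edges.length with hL
  have hAcard : A.card = L := List.toFinset_card_of_nodup hnd
  set S : Finset V := c.support.tail.toFinset with hS
  have htail_nd : c.support.tail.Nodup := hc.support_nodup
  have hScard : S.card = L := by
    rw [hS, List.toFinset_card_of_nodup htail_nd]
    have h1 := c.length_support
    have h2 := c.length_edges
    have h3 : c.support.tail.length = c.support.length - 1 := by simp
    omega
  have hmemS : ∀ u, u ∈ S ↔ u ∈ c.support := by
    intro u
    rw [hS, List.mem_toFinset]
    constructor
    · intro h
      rw [c.support_eq_cons]
      exact List.mem_cons_of_mem _ h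
    · intro h
      rw [c.support_eq_cons] at h
      rcases List.mem_cons.mp h with rfl | h
      · exact end_mem_support_tail c hc.not_nil
      · exact h
  have hAedge : ∀ e ∈ A, e ∈ G.edgeSet := fun e he =>
    c.edges_subset_edgeSet (List.mem_toFinset.mp he)
  -- every edge of the cycle has exactly two endpoints in S
  have hend : ∀ e ∈ A, (S.filter (fun x => x ∈ e)).card = 2 := by
    intro e he
    induction e using Sym2.ind with
    | _ a b =>
      have hab : G.Adj a b := c.adj_of_mem_edges (List.mem_toFinset.mp he)
      have haS : a ∈ S := (hmemS a).mpr (c.fst_mem_support_of_mem_edges (List.mem_toFinset.mp he))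
      have hbS : b ∈ S := (hmemS b).mpr (c.snd_mem_support_of_mem_edges (List.mem_toFinset.mp he))
      have hset : S.filter (fun x => x ∈ s(a, b)) = {a, b} := by
        ext x
        simp only [Finset.mem_filter, Sym2.mem_iff, Finset.mem_insert, Finset.mem_singleton]
        constructor
        · rintro ⟨_, h⟩; exact h
        · rintro (rfl | rfl)
          · exact ⟨haS, Or.inl rfl⟩
          · exact ⟨hbS, Or.inr rfl⟩
      rw [hset, Finset.card_insert_of_notMem (by simp [hab.ne]), Finset.card_singleton]
  -- double counting
  have hsum : ∀ T : Finset (Sym2 V),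
      ∑ u ∈ S, (T.filter (fun e => u ∈ e)).card = ∑ e ∈ T, (S.filter (fun x => x ∈ e)).card := by
    intro T
    simp_rw [Finset.card_filter]
    exact Finset.sum_comm
  -- at most one matching edge at each vertex
  have hmle : ∀ (u : V) (T : Finset (Sym2 V)), T ⊆ M →
      (T.filter (fun e => u ∈ e)).card ≤ 1 := by
    intro u T hT
    apply Finset.card_le_one.mpr
    intro e1 h1 e2 h2
    simp only [Finset.mem_filter] at h1 h2
    obtain ⟨e0, _, hu0⟩ := hM.2 u
    rw [hu0 e1 ⟨hT h1.1, h1.2⟩, hu0 e2 ⟨hT h2.1, h2.2⟩]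
  set k : ℕ := (A ∩ M).card with hk
  have hIM : ∑ u ∈ S, ((A ∩ M).filter (fun e => u ∈ e)).card = 2 * k := by
    rw [hsum]
    rw [Finset.sum_congr rfl (fun e he => hend e (Finset.inter_subset_left he))]
    simp [hk, mul_comm]
  have h2kL : 2 * k ≤ L := by
    calc 2 * k = ∑ u ∈ S, ((A ∩ M).filter (fun e => u ∈ e)).card := hIM.symm
      _ ≤ ∑ u ∈ S, 1 :=
        Finset.sum_le_sum (fun u _ => hmle u (A ∩ M) Finset.inter_subset_right)
      _ = L := by simp [hScard]
  -- each support vertex lies in exactly two cycle edges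
  have hdeg : ∀ u ∈ S, (A.filter (fun e => u ∈ e)).card = 2 := by
    intro u hu
    rw [hA, filter_toFinset_card c.edges hnd (fun e => u ∈ e)]
    exact cycle_filter_two c hc ((hmemS u).mp hu)
  -- rewrite the cycle weight
  have hcyc : cycWt w' c = ∑ e ∈ A, w' e := by
    rw [cycWt, hA, List.sum_toFinset _ hnd]
  set WM : ℤ := ∑ e ∈ A ∩ M, (w e : ℤ) with hWM
  set WN : ℤ := ∑ e ∈ A \ M, (w e : ℤ) with hWN
  have hsplit : ∑ e ∈ A, w' e
      = (∑ e ∈ A ∩ M, (-(w e : ℤ) - r - 1)) + (∑ e ∈ A \ M, ((w e : ℤ) + r + 1)) := by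
    rw [← Finset.sum_filter_add_sum_filter_not A (fun e => e ∈ M) w']
    congr 1
    · rw [Finset.filter_mem_eq_inter]
      exact Finset.sum_congr rfl fun e he => by
        rw [hw' e, if_pos (Finset.mem_of_mem_inter_right he)]
    · rw [← Finset.sdiff_eq_filter]
      exact Finset.sum_congr rfl fun e he => by
        rw [hw' e, if_neg (Finset.mem_sdiff.mp he).2]
  have h1 : ∑ e ∈ A ∩ M, (-(w e : ℤ) - r - 1) = -WM - (k : ℤ) * (r + 1) := by
    rw [Finset.sum_sub_distrib (f := fun e => -(w e : ℤ) - r) (g := fun _ => (1 : ℤ))]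
    rw [Finset.sum_sub_distrib (f := fun e => -(w e : ℤ)) (g := fun _ => r)]
    rw [Finset.sum_neg_distrib]
    simp only [Finset.sum_const, nsmul_eq_mul, hWM, hk]
    ring
  have h2 : ∑ e ∈ A \ M, ((w e : ℤ) + r + 1) = WN + ((A \ M).card : ℤ) * (r + 1) := by
    rw [Finset.sum_add_distrib, Finset.sum_add_distrib]
    simp only [Finset.sum_const, nsmul_eq_mul, hWN]
    ring
  have hcyc2 : cycWt w' c = WN - WM + (r + 1) * (((A \ M).card : ℤ) - (k : ℤ)) := by
    rw [hcyc, hsplit, h1, h2]; ring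
  have hcards : (A \ M).card + k = L := by
    rw [hk, ← hAcard]
    exact Finset.card_sdiff_add_card_inter A M
  have hr0 : 0 ≤ r := by
    refine le_trans ?_ hr
    exact Finset.sum_nonneg fun e _ => by positivity
  have hWM_le : WM ≤ r := by
    refine le_trans ?_ hr
    exact Finset.sum_le_sum_of_subset_of_nonneg Finset.inter_subset_right
      (fun e _ _ => by positivity)
  have hWN0 : 0 ≤ WN := Finset.sum_nonneg fun e _ => by positivity
  rcases lt_or_eq_of_le h2kL with hcase | hcase
  · -- strict case: surplus dominates
    have hd : (1 : ℤ) ≤ ((A \ M).card : ℤ) - (k : ℤ) := by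
      have h' : k + 1 ≤ (A \ M).card := by omega
      have h'' := (Nat.cast_le (α := ℤ)).mpr h'
      push_cast at h''
      linarith
    have hmul : (r + 1) * 1 ≤ (r + 1) * (((A \ M).card : ℤ) - (k : ℤ)) :=
      mul_le_mul_of_nonneg_left hd (by linarith)
    rw [hcyc2]
    linarith
  · -- alternating case: 2k = L
    have hall : ∀ u ∈ S, ((A ∩ M).filter (fun e => u ∈ e)).card = 1 := by
      have hle : ∀ u ∈ S, ((A ∩ M).filter (fun e => u ∈ e)).card ≤ 1 :=
        fun u _ => hmle u _ Finset.inter_subset_right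
      have heq : ∑ u ∈ S, ((A ∩ M).filter (fun e => u ∈ e)).card = ∑ u ∈ S, 1 := by
        rw [hIM]; simp [hScard, hcase]
      intro u hu
      exact (Finset.sum_eq_sum_iff_of_le hle).mp heq u hu
    set M' : Finset (Sym2 V) := (M \ A) ∪ (A \ M) with hM'def
    have hPM' : IsPM G M' := by
      constructor
      · intro e he
        rcases Finset.mem_union.mp he with h | h
        · exact hM.1 e (Finset.mem_sdiff.mp h).1
        · exact hAedge e (Finset.mem_sdiff.mp h).1
      · intro u
        by_cases huS : u ∈ S
        · have hF2 : (A.filter (fun e => u ∈ e)).card = 2 := hdeg u huS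
          have hF1 : ((A ∩ M).filter (fun e => u ∈ e)).card = 1 := hall u huS
          have hsplitF : (A.filter (fun e => u ∈ e)).filter (fun e => e ∈ M)
              = (A ∩ M).filter (fun e => u ∈ e) := by
            ext e
            simp only [Finset.mem_filter, Finset.mem_inter]
            tauto
          have hnotM : ((A.filter (fun e => u ∈ e)).filter (fun e => e ∉ M)).card = 1 := by
            have := Finset.card_filter_add_card_filter_not
              (s := A.filter (fun e => u ∈ e)) (p := fun e => e ∈ M)
            rw [hsplitF, hF1, hF2] at this
            omega
          obtain ⟨e₂, he₂⟩ := Finset.card_eq_one.mp hnotM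
          obtain ⟨e₁, he₁⟩ := Finset.card_eq_one.mp hF1
          have he₂m : e₂ ∈ (A.filter (fun e => u ∈ e)).filter (fun e => e ∉ M) := by
            rw [he₂]; exact Finset.mem_singleton_self e₂
          have he₁m : e₁ ∈ (A ∩ M).filter (fun e => u ∈ e) := by
            rw [he₁]; exact Finset.mem_singleton_self e₁
          simp only [Finset.mem_filter] at he₂m he₁m
          refine ⟨e₂, ⟨Finset.mem_union_right _ (Finset.mem_sdiff.mpr
            ⟨he₂m.1.1, he₂m.2⟩), he₂m.1.2⟩, ?_⟩
          rintro e ⟨heM', hue⟩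
          rcases Finset.mem_union.mp heM' with h | h
          · exfalso
            obtain ⟨e₀, _, hu0⟩ := hM.2 u
            have hee : e = e₀ := hu0 e ⟨(Finset.mem_sdiff.mp h).1, hue⟩
            have he1e : e₁ = e₀ :=
              hu0 e₁ ⟨(Finset.mem_inter.mp he₁m.1).2, he₁m.2⟩
            have : e ∈ A := by
              rw [hee, ← he1e]
              exact (Finset.mem_inter.mp he₁m.1).1
            exact (Finset.mem_sdiff.mp h).2 this
          · have : e ∈ (A.filter (fun e => u ∈ e)).filter (fun e => e ∉ M) := by
              refine Finset.mem_filter.mpr ⟨Finset.mem_filter.mpr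
                ⟨(Finset.mem_sdiff.mp h).1, hue⟩, (Finset.mem_sdiff.mp h).2⟩
            rw [he₂] at this
            exact Finset.mem_singleton.mp this
        · obtain ⟨e₀, ⟨he₀M, hue₀⟩, hu0⟩ := hM.2 u
          have he₀A : e₀ ∉ A := by
            intro hA0
            exact huS ((hmemS u).mpr
              (mem_support_of_mem_edges' c (List.mem_toFinset.mp hA0) hue₀))
          refine ⟨e₀, ⟨Finset.mem_union_left _ (Finset.mem_sdiff.mpr ⟨he₀M, he₀A⟩), hue₀⟩, ?_⟩
          rintro e ⟨heM', hue⟩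
          rcases Finset.mem_union.mp heM' with h | h
          · exact hu0 e ⟨(Finset.mem_sdiff.mp h).1, hue⟩
          · exact absurd ((hmemS u).mpr (mem_support_of_mem_edges' c
              (List.mem_toFinset.mp (Finset.mem_sdiff.mp h).1) hue)) huS
    have hdisj : Disjoint (M \ A) (A \ M) := by
      apply Finset.disjoint_left.mpr
      intro e h1' h2'
      exact (Finset.mem_sdiff.mp h1').2 (Finset.mem_sdiff.mp h2').1
    have hwtM' : wt (fun e => (w e : ℤ)) M' = wt (fun e => (w e : ℤ)) M - WM + WN := by
      rw [hM'def, wt, Finset.sum_union hdisj]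
      have hMA : ∑ e ∈ M \ A, (w e : ℤ) = (∑ e ∈ M, (w e : ℤ)) - WM := by
        rw [← Finset.sdiff_inter_self_left M A,
          Finset.sum_sdiff_eq_sub Finset.inter_subset_left, hWM, Finset.inter_comm]
      rw [hMA, hWN, wt]
    have hmin' := hmin M' hPM'
    rw [hwtM'] at hmin'
    have hcard0 : ((A \ M).card : ℤ) - (k : ℤ) = 0 := by
      have : (A \ M).card = k := by omega
      rw [this]; ring
    rw [hcyc2, hcard0, mul_zero, add_zero]
    linarith
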